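/- Let n ≥ 2 and i ∈ [n-1]. Then F_i^+ ∩ F_i^- = ∅, where F_i^+ := conv{v_J : J ⊆ [n-1], i ∈ J} and F_i^- := conv{v_J : J ⊆ [n-1], i ∉ J}. -/
import Mathlib


open Matrix

attribute [local instance] Classical.propDecidable

noncomputable section

namespace PetersonPaper

/-- The natural number `c` (0-based; encoding the 1-based element `c+1`) belongs to
`J ⊆ [n-1]`. -/
def memJ (n : ℕ) (J : Set (Fin (n-1))) (c : ℕ) : Prop :=
  ∃ h : c < n - 1, (⟨c, h⟩ : Fin (n-1)) ∈ J

/-- The (0-based) first element of the maximal interval of consecutive integers of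
`J` containing `i ∈ J`. -/
def compStart (n : ℕ) (J : Set (Fin (n-1))) (i : Fin (n-1)) : ℕ :=
  sInf {a : ℕ | a ≤ i.1 ∧ ∀ c : ℕ, a ≤ c → c ≤ i.1 → memJ n J c}

/-- The (0-based) last element of the maximal interval of consecutive integers of
`J` containing `i ∈ J`. -/
def compEnd (n : ℕ) (J : Set (Fin (n-1))) (i : Fin (n-1)) : ℕ :=
  sSup {b : ℕ | b < n - 1 ∧ i.1 ≤ b ∧ ∀ c : ℕ, i.1 ≤ c → c ≤ b → memJ n J c}

/-- The vertex `v_J ∈ ℝ^{n-1}`: its `i`-th coordinate is `(i+1-a)(b+1-i)` (1-based)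
if `i ∈ J` with `[a,b]` the maximal interval of `J` containing `i`, and `0`
otherwise. -/
def vJ (n : ℕ) (J : Set (Fin (n-1))) : Fin (n-1) → ℝ :=
  fun i => if i ∈ J then
    (((i.1 + 1 - compStart n J i) * (compEnd n J i + 1 - i.1) : ℕ) : ℝ) else 0

/-- The standard inner product on `ℝ^{n-1}`. -/
def dotR (n : ℕ) (a b : Fin (n-1) → ℝ) : ℝ := ∑ i, a i * b i

/-- The standard basis vector `e_i` of `ℝ^{n-1}`. -/
def stdE (n : ℕ) (i : Fin (n-1)) : Fin (n-1) → ℝ := fun j => if j = i then 1 else 0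

/-- `-α^∨_i = e_{i-1} - 2 e_i + e_{i+1}` with the convention `e_0 = e_n = 0`
(1-based; `i : Fin (n-1)` encodes `i.1+1`). -/
def negAlphaV (n : ℕ) (i : Fin (n-1)) : Fin (n-1) → ℝ :=
  fun j => (if j.1 + 1 = i.1 then 1 else 0) - 2 * (if j = i then 1 else 0)
    + (if j.1 = i.1 + 1 then 1 else 0)

/-- The face `F_i^+ = conv{v_J : i ∈ J}`. -/
def Fplus (n : ℕ) (i : Fin (n-1)) : Set (Fin (n-1) → ℝ) :=
  convexHull ℝ { v | ∃ J : Set (Fin (n-1)), i ∈ J ∧ v = vJ n J }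

/-- The face `F_i^- = conv{v_J : i ∉ J}`. -/
def Fminus (n : ℕ) (i : Fin (n-1)) : Set (Fin (n-1) → ℝ) :=
  convexHull ℝ { v | ∃ J : Set (Fin (n-1)), i ∉ J ∧ v = vJ n J }

/-- The polytope `P_{n-1} = conv{v_J : J ⊆ [n-1]}`. -/
def Ppoly (n : ℕ) : Set (Fin (n-1) → ℝ) :=
  convexHull ℝ { v | ∃ J : Set (Fin (n-1)), v = vJ n J }

/-- The face `F_{K,J} = (⋂_{i ∈ K} F_i^+) ∩ (⋂_{i ∉ J} F_i^-)` of `P_{n-1}`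
(intersecting with `P_{n-1}` itself, which encodes the convention
`F_{∅,[n-1]} = P_{n-1}` and is harmless otherwise, all faces being subsets of
`P_{n-1}`). -/
def FKJ (n : ℕ) (K J : Set (Fin (n-1))) : Set (Fin (n-1) → ℝ) :=
  Ppoly n ∩ (⋂ i ∈ K, Fplus n i) ∩ (⋂ i ∈ (Jᶜ : Set (Fin (n-1))), Fminus n i)

lemma isLinearMap_eval (n : ℕ) (i : Fin (n-1)) :
    IsLinearMap ℝ (fun x : Fin (n-1) → ℝ => x i) :=
  ⟨fun _ _ => rfl, fun _ _ => rfl⟩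

lemma vJ_coord_ge_one (n : ℕ) (J : Set (Fin (n-1))) (i : Fin (n-1)) (hi : i ∈ J) :
    1 ≤ vJ n J i := by
  have hstart : compStart n J i ≤ i.1 := by
    apply Nat.sInf_le
    refine ⟨le_refl _, fun c hc1 hc2 => ?_⟩
    have : c = i.1 := le_antisymm hc2 hc1
    subst this
    exact ⟨i.2, by simpa using hi⟩
  have hend : i.1 ≤ compEnd n J i := by
    apply le_csSup
    · exact ⟨n - 1, fun b hb => le_of_lt hb.1⟩
    · refine ⟨i.2, le_refl _, fun c hc1 hc2 => ?_⟩
      have : c = i.1 := le_antisymm hc2 hc1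
      subst this
      exact ⟨i.2, by simpa using hi⟩
  have h1 : 1 ≤ (i.1 + 1 - compStart n J i) * (compEnd n J i + 1 - i.1) :=
    Nat.one_le_iff_ne_zero.mpr (Nat.mul_ne_zero
      (by omega) (by omega))
  simp only [vJ, if_pos hi]
  exact_mod_cast h1

/-- Lemma: `F_i^+ ∩ F_i^- = ∅`. -/
theorem Fplus_inter_Fminus_empty (n : ℕ) (hn : 2 ≤ n) (i : Fin (n-1)) :
    Fplus n i ∩ Fminus n i = ∅ := by
  have hplus : Fplus n i ⊆ {x : Fin (n-1) → ℝ | 1 ≤ x i} := by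
    apply convexHull_min
    · rintro v ⟨J, hiJ, rfl⟩
      exact vJ_coord_ge_one n J i hiJ
    · exact convex_halfSpace_ge (isLinearMap_eval n i) 1
  have hminus : Fminus n i ⊆ {x : Fin (n-1) → ℝ | x i ≤ 0} := by
    apply convexHull_min
    · rintro v ⟨J, hiJ, rfl⟩
      simp [vJ, hiJ]
    · exact convex_halfSpace_le (isLinearMap_eval n i) 0
  ext x
  simp only [Set.mem_inter_iff, Set.mem_empty_iff_false, iff_false]
  rintro ⟨h1, h2⟩
  have := hplus h1
  have := hminus h2
  simp only [Set.mem_setOf_eq] at *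
  linarith

end PetersonPaper
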